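/- For every n ≥ 4 that is a multiple of 4, consider the bipartite graph consisting of n/4 vertex-disjoint copies of K_{2,2} (no edges between different copies), with all edge weights drawn independently and uniformly from [0,1], and let τ be the number of iterations until the belief propagation algorithm of Bayati et al. for maximum-weight matching converges on this graph (BP runs in parallel and independently on each copy, and τ is the maximum of the convergence times of the copies). Then there exist constants c' > 0 and C > 0 such that for every t ≥ n/c', the probability that τ ≥ t is at least C·n/t. -/

import Mathlib

open MeasureTheory

/-- The messages of the belief propagation algorithm of Bayati et al. on the complete
bipartite graph `K_{n,n}` with weights `w`. `(BPmsg n w t).1 i j r` is the message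
`m⃗ᵗ_{ij}(r)` from `u_i` to `v_j` and `(BPmsg n w t).2 j i r` is the message
`m⃖ᵗ_{ji}(r)` from `v_j` to `u_i` at iteration `t`. (For `n ≤ 1` the maxima over the
empty index set take the junk value `0` of real suprema.) -/
noncomputable def BPmsg (n : ℕ) (w : Fin n → Fin n → ℝ) :
    ℕ → (Fin n → Fin n → Fin n → ℝ) × (Fin n → Fin n → Fin n → ℝ)
  | 0 =>
    (fun i j r => if r = i then w i j else 0,
     fun j i r => if r = j then w i j else 0)
  | t + 1 =>
    (fun i j r =>
      if r = i then w i j + ∑ k ∈ Finset.univ.filter (· ≠ j), (BPmsg n w t).2 k i j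
      else ⨆ q : {q : Fin n // q ≠ j},
        (w i q + ∑ k ∈ Finset.univ.filter (· ≠ j), (BPmsg n w t).2 k i (q : Fin n)),
     fun j i r =>
      if r = j then w i j + ∑ k ∈ Finset.univ.filter (· ≠ i), (BPmsg n w t).1 k j i
      else ⨆ q : {q : Fin n // q ≠ i},
        (w q j + ∑ k ∈ Finset.univ.filter (· ≠ i), (BPmsg n w t).1 k j (q : Fin n)))

/-- The belief `bᵗ_{u_i}(r)` of node `u_i` at iteration `t`. -/
noncomputable def belief (n : ℕ) (w : Fin n → Fin n → ℝ) (t : ℕ) (i r : Fin n) : ℝ :=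
  w i r + ∑ k, (BPmsg n w t).2 k i r

/-- A matching of `K_{n,n}`, given as a set of edges `(i, j)` (meaning `(u_i, v_j)`)
that are pairwise non-adjacent. -/
def IsMatching (n : ℕ) (M : Finset (Fin n × Fin n)) : Prop :=
  ∀ p ∈ M, ∀ q ∈ M, p ≠ q → p.1 ≠ q.1 ∧ p.2 ≠ q.2

/-- The weight of a matching of `K_{n,n}`. -/
noncomputable def matchingWeight (n : ℕ) (w : Fin n → Fin n → ℝ)
    (M : Finset (Fin n × Fin n)) : ℝ :=
  ∑ p ∈ M, w p.1 p.2

/-- Belief propagation has converged by iteration `t`: there is a unique maximum-weight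
matching `M`, and at every iteration `s ≥ t` the estimated matching (matching each `u_i`
to the unique maximizer of its belief) equals `M`. -/
def BPConvergedBy (n : ℕ) (w : Fin n → Fin n → ℝ) (t : ℕ) : Prop :=
  ∃ M : Finset (Fin n × Fin n), IsMatching n M ∧
    (∀ M', IsMatching n M' → M' ≠ M → matchingWeight n w M' < matchingWeight n w M) ∧
    ∀ s, t ≤ s → ∀ i : Fin n, ∃ j : Fin n, (i, j) ∈ M ∧
      ∀ r : Fin n, r ≠ j → belief n w s i r < belief n w s i j

/-- **Average-case lower tail bound on disjoint copies of `K_{2,2}`.** For `n ≥ 4` a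
multiple of `4`, consider the bipartite graph consisting of `n/4` vertex-disjoint
copies of `K_{2,2}` with all edge weights drawn independently and uniformly from
`[0,1]`. BP runs in parallel and independently on the copies, so it needs at least
`t` iterations if and only if on some copy it has not converged by iteration `t - 1`.
There are constants `c' > 0` and `C > 0` such that for every `t ≥ n/c'` the
probability of this is at least `C·n/t`. -/
lemma fin2_filter_ne (j : Fin 2) : Finset.univ.filter (· ≠ j) = {j + 1} := by
  fin_cases j <;> decide
instance fin2unique (j : Fin 2) : Unique {q : Fin 2 // q ≠ j} where
  default := ⟨j + 1, by fin_cases j <;> decide⟩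
  uniq := by rintro ⟨q, hq⟩; ext; revert hq; fin_cases j <;> fin_cases q <;> decide
lemma fin2_iSup (j : Fin 2) (f : Fin 2 → ℝ) :
    (⨆ q : {q : Fin 2 // q ≠ j}, f (q : Fin 2)) = f (j + 1) := ciSup_unique
lemma BPmsg_fst_succ (w : Fin 2 → Fin 2 → ℝ) (t : ℕ) (i j r : Fin 2) :
    (BPmsg 2 w (t+1)).1 i j r =
      if r = i then w i j + (BPmsg 2 w t).2 (j+1) i j
      else w i (j+1) + (BPmsg 2 w t).2 (j+1) i (j+1) := by
  show (if r = i then _ else _) = _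
  rw [fin2_filter_ne j]
  simp only [Finset.sum_singleton]
  split
  · rfl
  · exact fin2_iSup j fun q => w i q + (BPmsg 2 w t).2 (j+1) i q
lemma BPmsg_snd_succ (w : Fin 2 → Fin 2 → ℝ) (t : ℕ) (j i r : Fin 2) :
    (BPmsg 2 w (t+1)).2 j i r =
      if r = j then w i j + (BPmsg 2 w t).1 (i+1) j i
      else w (i+1) j + (BPmsg 2 w t).1 (i+1) j (i+1) := by
  show (if r = j then _ else _) = _
  rw [fin2_filter_ne i]
  simp only [Finset.sum_singleton]
  split
  · rfl
  · exact fin2_iSup i fun q => w q j + (BPmsg 2 w t).1 (i+1) j q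

/-- generic 4-cycle of the BP recursion on `K_{2,2}` -/
noncomputable def cyc (α β : ℝ) : ℕ → ℝ × ℝ × ℝ × ℝ
  | 0 => (α, 0, β, 0)
  | t + 1 =>
    (α + (cyc α β t).2.1, β + (cyc α β t).2.2.1, β + (cyc α β t).2.2.2, α + (cyc α β t).1)

lemma cyc_spec (α β : ℝ) (k : ℕ) :
    cyc α β (4 * k) = ((2*k+1) * α + 2*k * β, 2*k * (α + β),
      2*k * α + (2*k+1) * β, 2*k * (α + β)) := by
  induction k with
  | zero => simp [cyc]
  | succ k ih =>
    have h4 : 4 * (k + 1) = (4 * k) + 1 + 1 + 1 + 1 := by ring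
    rw [h4, cyc, cyc, cyc, cyc, ih]
    push_cast
    refine Prod.ext ?_ (Prod.ext ?_ (Prod.ext ?_ ?_)) <;> simp <;> ring

lemma cycleA (w : Fin 2 → Fin 2 → ℝ) : ∀ t : ℕ,
    ((BPmsg 2 w t).1 0 0 0, (BPmsg 2 w t).2 1 0 0,
     (BPmsg 2 w t).1 1 1 1, (BPmsg 2 w t).2 0 1 1) = cyc (w 0 0) (w 1 1) t
  | 0 => by simp [BPmsg, cyc]
  | t + 1 => by
    have ih := cycleA w t
    rw [cyc, ← ih]
    simp [BPmsg_fst_succ, BPmsg_snd_succ]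

lemma cycleB (w : Fin 2 → Fin 2 → ℝ) : ∀ t : ℕ,
    ((BPmsg 2 w t).2 0 0 0, (BPmsg 2 w t).1 1 0 0,
     (BPmsg 2 w t).2 1 1 1, (BPmsg 2 w t).1 0 1 1) = cyc (w 0 0) (w 1 1) t
  | 0 => by simp [BPmsg, cyc]
  | t + 1 => by
    have ih := cycleB w t
    rw [cyc, ← ih]
    simp [BPmsg_fst_succ, BPmsg_snd_succ]

lemma cycleZ (w : Fin 2 → Fin 2 → ℝ) : ∀ t : ℕ,
    ((BPmsg 2 w t).1 1 0 1, (BPmsg 2 w t).2 1 1 0,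
     (BPmsg 2 w t).1 0 1 0, (BPmsg 2 w t).2 0 0 1) = cyc (w 1 0) (w 0 1) t
  | 0 => by simp [BPmsg, cyc]
  | t + 1 => by
    have ih := cycleZ w t
    rw [cyc, ← ih]
    simp [BPmsg_fst_succ, BPmsg_snd_succ]

lemma cycleW (w : Fin 2 → Fin 2 → ℝ) : ∀ t : ℕ,
    ((BPmsg 2 w t).2 1 0 1, (BPmsg 2 w t).1 1 1 0,
     (BPmsg 2 w t).2 0 1 0, (BPmsg 2 w t).1 0 0 1) = cyc (w 0 1) (w 1 0) t
  | 0 => by simp [BPmsg, cyc]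
  | t + 1 => by
    have ih := cycleW w t
    rw [cyc, ← ih]
    simp [BPmsg_fst_succ, BPmsg_snd_succ]

lemma belief_4k_0 (w : Fin 2 → Fin 2 → ℝ) (k : ℕ) :
    belief 2 w (4 * k) 0 0 = (4*k+2) * w 0 0 + 4*k * w 1 1 := by
  have hA := congrArg (fun p : ℝ × ℝ × ℝ × ℝ => p.2.1) ((cycleA w (4*k)).trans (cyc_spec _ _ k))
  have hB := congrArg (fun p : ℝ × ℝ × ℝ × ℝ => p.1) ((cycleB w (4*k)).trans (cyc_spec _ _ k))
  simp only at hA hB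
  rw [belief, Fin.sum_univ_two, hA, hB]
  ring

lemma belief_4k_1 (w : Fin 2 → Fin 2 → ℝ) (k : ℕ) :
    belief 2 w (4 * k) 0 1 = (4*k+2) * w 0 1 + 4*k * w 1 0 := by
  have hZ := congrArg (fun p : ℝ × ℝ × ℝ × ℝ => p.2.2.2) ((cycleZ w (4*k)).trans (cyc_spec _ _ k))
  have hW := congrArg (fun p : ℝ × ℝ × ℝ × ℝ => p.1) ((cycleW w (4*k)).trans (cyc_spec _ _ k))
  simp only at hZ hW
  rw [belief, Fin.sum_univ_two, hZ, hW]
  ring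

section Curry
variable {ι κ : Type*} [Fintype ι] [Fintype κ] (μ : Measure ℝ) [IsProbabilityMeasure μ]

omit [Fintype ι] [Fintype κ] in
lemma measurable_curry_map :
    Measurable (fun (v : ι → κ → ℝ) (p : ι × κ) => v p.1 p.2) :=
  measurable_pi_lambda _ fun p => (measurable_pi_apply p.2).comp (measurable_pi_apply p.1)

lemma map_curry :
    Measure.pi (fun _ : ι × κ => μ) =
      Measure.map (fun (v : ι → κ → ℝ) (p : ι × κ) => v p.1 p.2)
        (Measure.pi fun _ : ι => Measure.pi fun _ : κ => μ) := by
  refine Measure.pi_eq fun s hs => ?_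
  rw [Measure.map_apply (measurable_curry_map (ι := ι) (κ := κ)) (MeasurableSet.univ_pi hs)]
  have hpre : (fun (v : ι → κ → ℝ) (p : ι × κ) => v p.1 p.2) ⁻¹' (Set.pi Set.univ s)
      = Set.pi Set.univ (fun i => Set.pi Set.univ fun k => s (i, k)) := by
    ext v
    simp [Set.mem_pi, Prod.forall]
  rw [hpre, Measure.pi_pi]
  simp_rw [Measure.pi_pi]
  rw [← Finset.prod_product']
  rfl

lemma pi_prod_cylinder (S : Set (κ → ℝ)) (hS : MeasurableSet S) :
    Measure.pi (fun _ : ι × κ => μ) {w : ι × κ → ℝ | ∀ i : ι, (fun k => w (i, k)) ∈ S}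
      = (Measure.pi fun _ : κ => μ) S ^ Fintype.card ι := by
  have hmeas : MeasurableSet {w : ι × κ → ℝ | ∀ i : ι, (fun k => w (i, k)) ∈ S} := by
    rw [Set.setOf_forall]
    exact MeasurableSet.iInter fun i =>
      (measurable_pi_lambda _ fun k => measurable_pi_apply (i, k)) hS
  rw [map_curry μ, Measure.map_apply (measurable_curry_map (ι := ι) (κ := κ)) hmeas]
  have hpre : (fun (v : ι → κ → ℝ) (p : ι × κ) => v p.1 p.2) ⁻¹'
      {w : ι × κ → ℝ | ∀ i : ι, (fun k => w (i, k)) ∈ S} = Set.pi Set.univ (fun _ : ι => S) := by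
    ext v; simp [Set.mem_pi]
  rw [hpre, Measure.pi_pi, Finset.prod_const, Finset.card_univ]
end Curry

noncomputable def bh (N : ℕ) : ℝ := 1 / (20 * N)
noncomputable def bd (N : ℕ) : ℝ := 1 / (10 * N)

noncomputable def boxL (N : ℕ) (k : Fin N × Fin N × Fin N) : ℝ :=
  4/5 + ((k.2.1 : ℝ) + (k.2.2 : ℝ) - (k.1 : ℝ)) * bh N

noncomputable def boxInt (N : ℕ) (k : Fin N × Fin N × Fin N) : Fin 2 × Fin 2 → Set ℝ :=
  fun e =>
    if e = (0,0) then Set.Ico (3/5 + (k.1 : ℝ) * bh N) (3/5 + ((k.1 : ℝ)+1) * bh N)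
    else if e = (0,1) then Set.Ico (4/5 + (k.2.1 : ℝ) * bh N) (4/5 + ((k.2.1 : ℝ)+1) * bh N)
    else if e = (1,0) then Set.Ico (3/5 + (k.2.2 : ℝ) * bh N) (3/5 + ((k.2.2 : ℝ)+1) * bh N)
    else Set.Ico (boxL N k + 2 * bh N) (boxL N k + 2 * bh N + bd N)

noncomputable def region (N : ℕ) : Set ((Fin 2 × Fin 2) → ℝ) :=
  ⋃ k : Fin N × Fin N × Fin N, Set.pi Set.univ (boxInt N k)

lemma boxInt_eval_00 (N k) : boxInt N k (0,0)
    = Set.Ico (3/5 + (k.1 : ℝ) * bh N) (3/5 + ((k.1 : ℝ)+1) * bh N) := by simp [boxInt]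
lemma boxInt_eval_01 (N k) : boxInt N k (0,1)
    = Set.Ico (4/5 + (k.2.1 : ℝ) * bh N) (4/5 + ((k.2.1 : ℝ)+1) * bh N) := by
  rw [boxInt, if_neg (by decide), if_pos rfl]
lemma boxInt_eval_10 (N k) : boxInt N k (1,0)
    = Set.Ico (3/5 + (k.2.2 : ℝ) * bh N) (3/5 + ((k.2.2 : ℝ)+1) * bh N) := by
  rw [boxInt, if_neg (by decide), if_neg (by decide), if_pos rfl]
lemma boxInt_eval_11 (N k) : boxInt N k (1,1)
    = Set.Ico (boxL N k + 2 * bh N) (boxL N k + 2 * bh N + bd N) := by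
  rw [boxInt, if_neg (by decide), if_neg (by decide), if_neg (by decide)]

lemma measurableSet_boxInt (N k e) : MeasurableSet (boxInt N k e) := by
  rw [boxInt]
  split <;> [skip; split] <;> [skip; skip; split] <;> exact measurableSet_Ico

lemma measurableSet_region (N : ℕ) : MeasurableSet (region N) :=
  MeasurableSet.iUnion fun k => MeasurableSet.univ_pi (measurableSet_boxInt N k)

lemma bh_pos {N : ℕ} (hN : 1 ≤ N) : 0 < bh N := by
  have : (0:ℝ) < N := by exact_mod_cast hN
  rw [bh]; positivity

lemma bd_pos {N : ℕ} (hN : 1 ≤ N) : 0 < bd N := by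
  have : (0:ℝ) < N := by exact_mod_cast hN
  rw [bd]; positivity

set_option maxHeartbeats 2000000 in
lemma box_subset_Icc {N : ℕ} (hN : 1 ≤ N) (k : Fin N × Fin N × Fin N) (e : Fin 2 × Fin 2) :
    boxInt N k e ⊆ Set.Icc (0:ℝ) 1 := by
  have hq : (1:ℝ) ≤ N := by exact_mod_cast hN
  have hq0 : (0:ℝ) < N := by linarith
  have hh0 : 0 < bh N := bh_pos hN
  have hd0 : 0 < bd N := bd_pos hN
  have hhq : 20 * (N:ℝ) * bh N = 1 := by rw [bh]; field_simp
  have hdq : 10 * (N:ℝ) * bd N = 1 := by rw [bd]; field_simp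
  have hk1 : (k.1 : ℝ) + 1 ≤ N := by exact_mod_cast k.1.is_lt
  have hk2 : (k.2.1 : ℝ) + 1 ≤ N := by exact_mod_cast k.2.1.is_lt
  have hk3 : (k.2.2 : ℝ) + 1 ≤ N := by exact_mod_cast k.2.2.is_lt
  have hk10 : (0:ℝ) ≤ (k.1 : ℝ) := Nat.cast_nonneg _
  have hk20 : (0:ℝ) ≤ (k.2.1 : ℝ) := Nat.cast_nonneg _
  have hk30 : (0:ℝ) ≤ (k.2.2 : ℝ) := Nat.cast_nonneg _
  have key : ∀ x : ℝ, 0 ≤ x → x + 1 ≤ N → (x + 1) * bh N ≤ 1/20 := by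
    intro x hx hxN
    have := mul_le_mul_of_nonneg_right hxN hh0.le
    linarith [hhq]
  have hb1 := key _ hk10 hk1
  have hb2 := key _ hk20 hk2
  have hb3 := key _ hk30 hk3
  fin_cases e
  · show boxInt N k (0,0) ⊆ Set.Icc 0 1
    rw [boxInt_eval_00]
    refine Set.Ico_subset_Icc_self.trans (Set.Icc_subset_Icc (by nlinarith) (by nlinarith))
  · show boxInt N k (0,1) ⊆ Set.Icc 0 1
    rw [boxInt_eval_01]
    refine Set.Ico_subset_Icc_self.trans (Set.Icc_subset_Icc (by nlinarith) (by nlinarith))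
  · show boxInt N k (1,0) ⊆ Set.Icc 0 1
    rw [boxInt_eval_10]
    refine Set.Ico_subset_Icc_self.trans (Set.Icc_subset_Icc (by nlinarith) (by nlinarith))
  · show boxInt N k (1,1) ⊆ Set.Icc 0 1
    rw [boxInt_eval_11, boxL]
    have hL1 : ((k.2.1 : ℝ) + (k.2.2 : ℝ) - (k.1 : ℝ)) * bh N ≤ 2 * (1/20) - 2 * bh N := by
      nlinarith [mul_nonneg hk10 hh0.le]
    have hL2 : -(1/20) ≤ ((k.2.1 : ℝ) + (k.2.2 : ℝ) - (k.1 : ℝ)) * bh N := by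
      nlinarith [mul_nonneg hk20 hh0.le, mul_nonneg hk30 hh0.le]
    have hdsmall : bd N ≤ 1/10 := by nlinarith [mul_le_mul_of_nonneg_right hq hd0.le]
    refine Set.Ico_subset_Icc_self.trans (Set.Icc_subset_Icc (by linarith) (by linarith))

noncomputable abbrev mu0 : Measure ℝ := (volume : Measure ℝ).restrict (Set.Icc 0 1)
noncomputable abbrev muE : Measure ((Fin 2 × Fin 2) → ℝ) := Measure.pi fun _ => mu0

instance : IsProbabilityMeasure mu0 := by
  constructor
  rw [Measure.restrict_apply_univ, Real.volume_Icc]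
  norm_num

lemma mu0_Ico {x y : ℝ} (h : Set.Ico x y ⊆ Set.Icc 0 1) :
    mu0 (Set.Ico x y) = ENNReal.ofReal (y - x) := by
  rw [Measure.restrict_apply measurableSet_Ico, Set.inter_eq_left.mpr h, Real.volume_Ico]

lemma measure_box {N : ℕ} (hN : 1 ≤ N) (k : Fin N × Fin N × Fin N) :
    muE (Set.pi Set.univ (boxInt N k)) = ENNReal.ofReal (bh N ^ 3 * bd N) := by
  have hh0 := bh_pos hN
  have hd0 := bd_pos hN
  rw [Measure.pi_pi, Fintype.prod_prod_type]
  simp only [Fin.prod_univ_two]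
  rw [boxInt_eval_00, boxInt_eval_01, boxInt_eval_10, boxInt_eval_11,
    mu0_Ico ((boxInt_eval_00 N k) ▸ box_subset_Icc hN k (0,0)),
    mu0_Ico ((boxInt_eval_01 N k) ▸ box_subset_Icc hN k (0,1)),
    mu0_Ico ((boxInt_eval_10 N k) ▸ box_subset_Icc hN k (1,0)),
    mu0_Ico ((boxInt_eval_11 N k) ▸ box_subset_Icc hN k (1,1))]
  rw [← ENNReal.ofReal_mul (by linarith), ← ENNReal.ofReal_mul (by nlinarith),
    ← ENNReal.ofReal_mul (by nlinarith)]
  congr 1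
  ring

lemma ico_grid_disjoint {x h : ℝ} (hh : 0 < h) {i j : ℕ} (hij : i ≠ j) :
    Disjoint (Set.Ico (x + (i:ℝ)*h) (x + ((i:ℝ)+1)*h)) (Set.Ico (x + (j:ℝ)*h) (x + ((j:ℝ)+1)*h)) := by
  rw [Set.Ico_disjoint_Ico]
  rcases lt_or_gt_of_ne hij with hlt | hlt
  · have : (i:ℝ) + 1 ≤ j := by exact_mod_cast hlt
    refine (min_le_left _ _).trans (le_max_of_le_right ?_)
    nlinarith
  · have : (j:ℝ) + 1 ≤ i := by exact_mod_cast hlt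
    refine (min_le_right _ _).trans (le_max_of_le_left ?_)
    nlinarith

lemma box_disjoint {N : ℕ} (hN : 1 ≤ N) :
    Pairwise (Function.onFun Disjoint
      (fun k : Fin N × Fin N × Fin N => Set.pi Set.univ (boxInt N k))) := by
  have hh0 := bh_pos hN
  intro k k' hkk'
  have : k.1 ≠ k'.1 ∨ k.2.1 ≠ k'.2.1 ∨ k.2.2 ≠ k'.2.2 := by
    by_contra hcon
    push_neg at hcon
    exact hkk' (Prod.ext hcon.1 (Prod.ext hcon.2.1 hcon.2.2))
  have key : ∀ e₀ : Fin 2 × Fin 2, Disjoint (boxInt N k e₀) (boxInt N k' e₀) →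
      Disjoint (Set.pi Set.univ (boxInt N k)) (Set.pi Set.univ (boxInt N k')) := by
    intro e₀ hdisj
    rw [Set.disjoint_left]
    intro v hv hv'
    exact Set.disjoint_left.mp hdisj (hv e₀ trivial) (hv' e₀ trivial)
  rcases this with h1 | h2 | h3
  · refine key (0,0) ?_
    rw [boxInt_eval_00, boxInt_eval_00]
    exact ico_grid_disjoint hh0 (Fin.val_ne_of_ne h1)
  · refine key (0,1) ?_
    rw [boxInt_eval_01, boxInt_eval_01]
    exact ico_grid_disjoint hh0 (Fin.val_ne_of_ne h2)
  · refine key (1,0) ?_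
    rw [boxInt_eval_10, boxInt_eval_10]
    exact ico_grid_disjoint hh0 (Fin.val_ne_of_ne h3)

lemma measure_region {N : ℕ} (hN : 1 ≤ N) :
    muE (region N) = ENNReal.ofReal (1 / (80000 * N)) := by
  have hq0 : (0:ℝ) < N := by exact_mod_cast hN
  rw [region, measure_iUnion (box_disjoint hN)
    (fun k => MeasurableSet.univ_pi (measurableSet_boxInt N k))]
  simp_rw [measure_box hN]
  rw [tsum_fintype, Finset.sum_const, Finset.card_univ, nsmul_eq_mul]
  rw [Fintype.card_prod, Fintype.card_prod, Fintype.card_fin]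
  rw [← ENNReal.ofReal_natCast, ← ENNReal.ofReal_mul (by positivity)]
  congr 1
  rw [bh, bd]
  push_cast
  field_simp
  ring

set_option maxHeartbeats 2000000 in
lemma region_spec {N : ℕ} (hN : 1 ≤ N) {v : (Fin 2 × Fin 2) → ℝ} (hv : v ∈ region N) :
    (∀ e, 0 ≤ v e) ∧ v (0,1) + v (1,0) < v (0,0) + v (1,1) ∧
    ∀ kk : ℕ, 4 * kk ≤ N →
      (4*(kk:ℝ)+2) * v (0,0) + 4*(kk:ℝ) * v (1,1)
        ≤ (4*(kk:ℝ)+2) * v (0,1) + 4*(kk:ℝ) * v (1,0) := by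
  obtain ⟨k, hk⟩ := Set.mem_iUnion.mp hv
  have hq : (1:ℝ) ≤ N := by exact_mod_cast hN
  have hq0 : (0:ℝ) < N := by linarith
  have hh0 : 0 < bh N := bh_pos hN
  have hd0 : 0 < bd N := bd_pos hN
  have hhq : 20 * (N:ℝ) * bh N = 1 := by rw [bh]; field_simp
  have hdq : 10 * (N:ℝ) * bd N = 1 := by rw [bd]; field_simp
  have hk1 : (k.1 : ℝ) + 1 ≤ N := by exact_mod_cast k.1.is_lt
  have hk2 : (k.2.1 : ℝ) + 1 ≤ N := by exact_mod_cast k.2.1.is_lt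
  have hk10 : (0:ℝ) ≤ (k.1 : ℝ) := Nat.cast_nonneg _
  have hk20 : (0:ℝ) ≤ (k.2.1 : ℝ) := Nat.cast_nonneg _
  have hk30 : (0:ℝ) ≤ (k.2.2 : ℝ) := Nat.cast_nonneg _
  have hb1 : ((k.1:ℝ) + 1) * bh N ≤ 1/20 := by
    nlinarith [mul_le_mul_of_nonneg_right hk1 hh0.le]
  have ha := hk (0,0) trivial
  have hb := hk (0,1) trivial
  have hc := hk (1,0) trivial
  have hd := hk (1,1) trivial
  rw [boxInt_eval_00, Set.mem_Ico] at ha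
  rw [boxInt_eval_01, Set.mem_Ico] at hb
  rw [boxInt_eval_10, Set.mem_Ico] at hc
  rw [boxInt_eval_11, Set.mem_Ico, boxL] at hd
  have hnonneg : ∀ e, 0 ≤ v e := fun e => ((box_subset_Icc hN k e) (hk e trivial)).1
  have hgpos : v (0,1) + v (1,0) < v (0,0) + v (1,1) := by
    nlinarith [ha.1, hb.2, hc.2, hd.1]
  refine ⟨hnonneg, hgpos, fun kk hkk => ?_⟩
  have hgub : v (0,0) + v (1,1) - v (0,1) - v (1,0) ≤ 3 * bh N + bd N := by
    nlinarith [ha.2, hb.1, hc.1, hd.2]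
  have hab : v (0,0) - v (0,1) ≤ -(3/20) := by
    nlinarith [ha.2, hb.1, mul_nonneg hk20 hh0.le]
  have hkkN : (4*(kk:ℝ)) ≤ N := by exact_mod_cast hkk
  have hg0 : 0 ≤ v (0,0) + v (1,1) - v (0,1) - v (1,0) := by linarith
  have h1 : (4*(kk:ℝ)) * (v (0,0) + v (1,1) - v (0,1) - v (1,0))
      ≤ (N:ℝ) * (v (0,0) + v (1,1) - v (0,1) - v (1,0)) :=
    mul_le_mul_of_nonneg_right hkkN hg0
  have h2 : (N:ℝ) * (v (0,0) + v (1,1) - v (0,1) - v (1,0)) ≤ 1/4 := by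
    nlinarith [mul_le_mul_of_nonneg_left hgub hq0.le]
  linarith

lemma bernoulli_tail {p : ℝ} (m : ℕ) (hp0 : 0 ≤ p) (hp1 : p ≤ 1) (hmp : (m:ℝ) * p ≤ 1) :
    (m:ℝ) * p / 2 ≤ 1 - (1 - p) ^ m := by
  have h0 : (0:ℝ) ≤ 1 - p := by linarith
  have hmp0 : 0 ≤ (m:ℝ) * p := by positivity
  have hden : (0:ℝ) < 1 + m * p := by linarith
  have hber : 1 + (m:ℝ) * p ≤ (1 + p) ^ m := one_add_mul_le_pow (by linarith) m
  have hkey : (1 - p) ^ m * (1 + (m:ℝ) * p) ≤ 1 := by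
    have h1 : (1 - p) ^ m * (1 + (m:ℝ) * p) ≤ (1 - p) ^ m * (1 + p) ^ m :=
      mul_le_mul_of_nonneg_left hber (by positivity)
    have h2 : (1 - p) ^ m * (1 + p) ^ m = (1 - p^2) ^ m := by
      rw [← mul_pow]; ring_nf
    have h3 : (1 - p^2) ^ m ≤ 1 := pow_le_one₀ (by nlinarith) (by nlinarith)
    linarith
  have h4 : (1 - p) ^ m ≤ 1 / (1 + (m:ℝ) * p) := by
    rw [le_div_iff₀ hden]; exact hkey
  have h5 : 1 - 1 / (1 + (m:ℝ) * p) = (m:ℝ) * p / (1 + (m:ℝ) * p) := by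
    field_simp
    ring
  have h6 : (m:ℝ) * p / 2 ≤ (m:ℝ) * p / (1 + (m:ℝ) * p) :=
    div_le_div_of_nonneg_left hmp0 hden (by linarith)
  linarith

lemma not_converged (w : Fin 2 → Fin 2 → ℝ) (t0 : ℕ) (k : ℕ)
    (hpos : ∀ i j, 0 ≤ w i j)
    (hg : w 0 1 + w 1 0 < w 0 0 + w 1 1)
    (hk : t0 ≤ 4 * k)
    (hbel : (4*(k:ℝ)+2) * w 0 0 + 4*k * w 1 1 ≤ (4*(k:ℝ)+2) * w 0 1 + 4*k * w 1 0) :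
    ¬ BPConvergedBy 2 w t0 := by
  rintro ⟨M, hM, hmax, hconv⟩
  obtain ⟨j, hjM, hj⟩ := hconv (4 * k) hk 0
  have hj01 : j = 0 ∨ j = 1 := by fin_cases j <;> simp
  rcases hj01 with rfl | rfl
  · have h1 := hj 1 (by decide)
    rw [belief_4k_0, belief_4k_1] at h1
    linarith
  · -- (0,1) ∈ M, so M ⊆ {(0,1),(1,0)} and M₁ = {(0,0),(1,1)} beats it
    have hMsub : M ⊆ ({(0,1),(1,0)} : Finset (Fin 2 × Fin 2)) := by
      intro p hp
      by_cases hpe : p = (0,1)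
      · simp [hpe]
      · have := hM p hp (0,1) hjM hpe
        have hp10 : p = (1,0) := by
          revert this
          have : ∀ p : Fin 2 × Fin 2, p.1 ≠ 0 ∧ p.2 ≠ 1 → p = (1,0) := by decide
          exact fun h => this p h
        simp [hp10]
    have hwle : matchingWeight 2 w M ≤ w 0 1 + w 1 0 := by
      have : matchingWeight 2 w M ≤ matchingWeight 2 w ({(0,1),(1,0)} : Finset (Fin 2 × Fin 2)) :=
        Finset.sum_le_sum_of_subset_of_nonneg hMsub (fun p _ _ => hpos p.1 p.2)
      have h2 : matchingWeight 2 w ({(0,1),(1,0)} : Finset (Fin 2 × Fin 2)) = w 0 1 + w 1 0 := by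
        rw [matchingWeight, Finset.sum_insert (by decide), Finset.sum_singleton]
      linarith
    have hMne : ({(0,0),(1,1)} : Finset (Fin 2 × Fin 2)) ≠ M := by
      intro h
      have : ((0,0) : Fin 2 × Fin 2) ∈ M := h ▸ (by decide)
      have := hMsub this
      revert this; decide
    have hlt := hmax ({(0,0),(1,1)} : Finset (Fin 2 × Fin 2)) (by unfold IsMatching; decide) hMne
    have h2 : matchingWeight 2 w ({(0,0),(1,1)} : Finset (Fin 2 × Fin 2)) = w 0 0 + w 1 1 := by
      rw [matchingWeight, Finset.sum_insert (by decide), Finset.sum_singleton]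
    rw [h2] at hlt
    linarith

set_option maxHeartbeats 2000000 in
theorem bp_disjoint_K22_lower_tail :
    ∃ c' C : ℝ, 0 < c' ∧ 0 < C ∧
      ∀ n : ℕ, 4 ∣ n → 4 ≤ n →
        ∀ t : ℕ, (n : ℝ) / c' ≤ t →
          ENNReal.ofReal (C * n / t) ≤
            Measure.pi
              (fun _ : Fin (n / 4) × (Fin 2 × Fin 2) =>
                (volume : Measure ℝ).restrict (Set.Icc 0 1))
              {w : Fin (n / 4) × (Fin 2 × Fin 2) → ℝ |
                ∃ j : Fin (n / 4),
                  ¬ BPConvergedBy 2 (fun a b => w (j, (a, b))) (t - 1)} := by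
  refine ⟨1/2, 1/1280000, by norm_num, by norm_num, ?_⟩
  intro n hdvd hn t ht
  have htn : 2 * (n:ℝ) ≤ t := by
    have : (n:ℝ) / (1/2) = 2 * n := by ring
    linarith [ht, this.symm.le.trans ht]
  have hn4r : ((n:ℝ)) ≥ 4 := by exact_mod_cast hn
  have ht8 : 8 ≤ t := by
    have : (8:ℝ) ≤ t := by linarith
    exact_mod_cast this
  have hnt : n ≤ t := by
    have : (n:ℝ) ≤ t := by linarith
    exact_mod_cast this
  set N := t + 2 with hNdef
  have hN1 : 1 ≤ N := by omega
  set kk := (t+2)/4 with hkkdef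
  have hkk4 : 4 * kk ≤ N := by omega
  have hkkt : t - 1 ≤ 4 * kk := by omega
  set m := n / 4 with hmdef
  have hmr : (m:ℝ) = (n:ℝ)/4 := by
    rw [hmdef, Nat.cast_div hdvd (by norm_num)]
    norm_num
  -- the per-copy bad region and global cylinder set
  set S : Set ((Fin 2 × Fin 2) → ℝ) := (region N)ᶜ with hSdef
  set T : Set ((Fin (n/4) × (Fin 2 × Fin 2)) → ℝ) :=
    {w | ∀ i : Fin (n/4), (fun k => w (i,k)) ∈ S} with hTdef
  have hSmeas : MeasurableSet S := (measurableSet_region N).compl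
  have hTmeas : MeasurableSet T := by
    rw [hTdef, Set.setOf_forall]
    exact MeasurableSet.iInter fun i =>
      (measurable_pi_lambda _ fun k => measurable_pi_apply (i, k)) hSmeas
  have hT : Measure.pi (fun _ : Fin (n / 4) × (Fin 2 × Fin 2) =>
        (volume : Measure ℝ).restrict (Set.Icc 0 1)) T = (muE S) ^ m := by
    rw [hTdef]
    rw [pi_prod_cylinder mu0 S hSmeas, Fintype.card_fin]
  -- numbers
  set p : ℝ := 1 / (80000 * (N:ℝ)) with hpdef
  have hNr : (0:ℝ) < N := by positivity
  have hp0 : 0 ≤ p := by positivity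
  have hp1 : p ≤ 1 := by
    rw [hpdef, div_le_one (by positivity)]
    have : (1:ℝ) ≤ (N:ℝ) := by exact_mod_cast hN1
    nlinarith
  have hmp : (m:ℝ) * p ≤ 1 := by
    rw [hpdef, mul_one_div, div_le_one (by positivity)]
    have h1 : (m:ℝ) ≤ n := by
      rw [hmr]; linarith
    have h2 : (n:ℝ) ≤ N := by
      have : n ≤ N := by omega
      exact_mod_cast this
    nlinarith
  have hmuS : muE S = ENNReal.ofReal (1 - p) := by
    rw [hSdef, measure_compl (measurableSet_region N) (measure_ne_top _ _),
      measure_region hN1, measure_univ, ← hpdef, ← ENNReal.ofReal_one,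
      ← ENNReal.ofReal_sub _ hp0]
  -- real inequality
  have hreal : 1/1280000 * (n:ℝ) / t ≤ 1 - (1 - p) ^ m := by
    have hber := bernoulli_tail m hp0 hp1 hmp
    have htpos : (0:ℝ) < t := by linarith
    have hNle : (N:ℝ) ≤ 2 * t := by
      have : (N:ℕ) ≤ 2 * t := by omega
      exact_mod_cast this
    have hmain : 1/1280000 * (n:ℝ) / t ≤ (m:ℝ) * p / 2 := by
      have hrhs : (m:ℝ) * p / 2 = (n:ℝ) / (640000 * N) := by
        rw [hmr, hpdef]; field_simp; ring_nf
      rw [hrhs, div_le_div_iff₀ htpos (by positivity)]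
      nlinarith [mul_le_mul_of_nonneg_left hNle (by positivity : (0:ℝ) ≤ (n:ℝ))]
    linarith
  -- ENNReal chain
  calc ENNReal.ofReal (1/1280000 * (n:ℝ) / t)
      ≤ ENNReal.ofReal (1 - (1 - p) ^ m) := ENNReal.ofReal_le_ofReal hreal
    _ = 1 - (muE S) ^ m := by
        rw [hmuS, ← ENNReal.ofReal_pow (by linarith), ← ENNReal.ofReal_one,
          ← ENNReal.ofReal_sub _ (pow_nonneg (by linarith) m)]
    _ = 1 - Measure.pi (fun _ : Fin (n / 4) × (Fin 2 × Fin 2) =>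
          (volume : Measure ℝ).restrict (Set.Icc 0 1)) T := by rw [hT]
    _ = Measure.pi (fun _ : Fin (n / 4) × (Fin 2 × Fin 2) =>
          (volume : Measure ℝ).restrict (Set.Icc 0 1)) Tᶜ :=
        (prob_compl_eq_one_sub hTmeas).symm
    _ ≤ _ := by
        refine measure_mono ?_
        intro w hw
        rw [Set.mem_compl_iff, hTdef, Set.mem_setOf_eq] at hw
        obtain ⟨j, hj⟩ := not_forall.mp hw
        have hv : (fun k => w (j,k)) ∈ region N := not_not.mp hj
        obtain ⟨hpos, hg, hbel⟩ := region_spec hN1 hv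
        exact ⟨j, not_converged _ (t-1) kk (fun i j' => hpos (i,j')) hg hkkt (hbel kk hkk4)⟩
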